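/- arXiv:2603.14835 — 6 statements merged into one kernel-verified Lean document; each statement's English description precedes it below -/
import Mathlib

section
/- Let 0 < α < 1 and τ > 0, and let U(F) denote the set of α-quantiles of F. For every probability distribution F on [0,∞), the set of α-quantiles of the right-censored distribution [F]_τ is a subset of { min(q, τ) : q ∈ U(F) }. -/
open MeasureTheory

/-- `x` is an `α`-quantile of the distribution `μ`:
`lim_{y↑x} F(y) = μ(Iio x) ≤ α ≤ μ(Iic x) = F(x)`. -/
def IsAlphaQuantile (μ : Measure ℝ) (α x : ℝ) : Prop :=
  (μ (Set.Iio x)).toReal ≤ α ∧ α ≤ (μ (Set.Iic x)).toReal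

lemma exists_quantile_ge (μ : Measure ℝ) [IsProbabilityMeasure μ]
    (hsupp : μ (Set.Iio 0) = 0) {α τ : ℝ} (hα : 0 < α) (hα1 : α < 1)
    (h : (μ (Set.Iio τ)).toReal ≤ α) :
    ∃ q, IsAlphaQuantile μ α q ∧ τ ≤ q := by
  set S : Set ℝ := {y | α ≤ (μ (Set.Iic y)).toReal} with hS
  -- S is nonempty
  have htop : Filter.Tendsto (fun y : ℝ => (μ (Set.Iic y)).toReal) Filter.atTop (nhds 1) := by
    have h1 := tendsto_measure_Iic_atTop (μ := μ)
    rw [measure_univ] at h1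
    have := (ENNReal.tendsto_toReal (by simp : (1 : ENNReal) ≠ ⊤)).comp h1
    simpa [Function.comp_def] using this
  have hSne : S.Nonempty := by
    obtain ⟨y, hy⟩ := (htop.eventually (eventually_ge_nhds hα1)).exists
    exact ⟨y, hy⟩
  have hSbdd : BddBelow S := by
    refine ⟨0, fun y hy => ?_⟩
    by_contra hy0
    push_neg at hy0
    have : μ (Set.Iic y) = 0 :=
      measure_mono_null (fun t ht => lt_of_le_of_lt ht hy0) hsupp
    rw [hS] at hy
    simp only [Set.mem_setOf_eq, this] at hy
    simp at hy
    linarith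
  set q₀ := sInf S with hq₀
  set q := max q₀ τ with hqdef
  have hfin : ∀ s : Set ℝ, μ s ≠ ⊤ := fun s => (measure_lt_top μ s).ne
  -- upper condition at q₀ (right continuity)
  have hupper₀ : ENNReal.ofReal α ≤ μ (Set.Iic q₀) := by
    have hseq : Filter.Tendsto (fun n : ℕ => μ (Set.Iic (q₀ + ((n : ℝ) + 1)⁻¹)))
        Filter.atTop (nhds (μ (⋂ n : ℕ, Set.Iic (q₀ + ((n : ℝ) + 1)⁻¹)))) := by
      refine tendsto_measure_iInter_atTop (fun n => measurableSet_Iic.nullMeasurableSet)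
        (fun n m hnm => Set.Iic_subset_Iic.2 ?_) ⟨0, hfin _⟩
      have : ((m : ℝ) + 1)⁻¹ ≤ ((n : ℝ) + 1)⁻¹ := by
        apply inv_anti₀ <;> [positivity; exact_mod_cast by linarith]
      linarith
    have hinter : (⋂ n : ℕ, Set.Iic (q₀ + ((n : ℝ) + 1)⁻¹)) = Set.Iic q₀ := by
      ext t
      simp only [Set.mem_iInter, Set.mem_Iic]
      constructor
      · intro ht
        refine le_of_forall_pos_le_add fun ε hε => ?_
        obtain ⟨n, hn⟩ := exists_nat_one_div_lt hε
        have := ht n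
        rw [one_div] at hn
        linarith
      · intro ht n
        have : (0:ℝ) < ((n : ℝ) + 1)⁻¹ := by positivity
        linarith
    rw [hinter] at hseq
    refine ge_of_tendsto hseq (Filter.Eventually.of_forall fun n => ?_)
    have hpos : (0:ℝ) < ((n : ℝ) + 1)⁻¹ := by positivity
    obtain ⟨y, hyS, hylt⟩ := Real.lt_sInf_add_pos hSne hpos
    calc ENNReal.ofReal α ≤ μ (Set.Iic y) := ENNReal.ofReal_le_of_le_toReal hyS
      _ ≤ μ (Set.Iic (q₀ + ((n : ℝ) + 1)⁻¹)) := measure_mono (Set.Iic_subset_Iic.2 hylt.le)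
  -- lower condition at q₀ (left limit)
  have hlower₀ : μ (Set.Iio q₀) ≤ ENNReal.ofReal α := by
    have hseq : Filter.Tendsto (fun n : ℕ => μ (Set.Iic (q₀ - ((n : ℝ) + 1)⁻¹)))
        Filter.atTop (nhds (μ (⋃ n : ℕ, Set.Iic (q₀ - ((n : ℝ) + 1)⁻¹)))) := by
      refine tendsto_measure_iUnion_atTop (fun n m hnm => Set.Iic_subset_Iic.2 ?_)
      have : ((m : ℝ) + 1)⁻¹ ≤ ((n : ℝ) + 1)⁻¹ := by
        apply inv_anti₀ <;> [positivity; exact_mod_cast by linarith]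
      linarith
    have hunion : (⋃ n : ℕ, Set.Iic (q₀ - ((n : ℝ) + 1)⁻¹)) = Set.Iio q₀ := by
      ext t
      simp only [Set.mem_iUnion, Set.mem_Iic, Set.mem_Iio]
      constructor
      · rintro ⟨n, hn⟩
        have : (0:ℝ) < ((n : ℝ) + 1)⁻¹ := by positivity
        linarith
      · intro ht
        obtain ⟨n, hn⟩ := exists_nat_one_div_lt (sub_pos.2 ht)
        rw [one_div] at hn
        exact ⟨n, by linarith⟩
    rw [hunion] at hseq
    refine le_of_tendsto hseq (Filter.Eventually.of_forall fun n => ?_)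
    have hpos : (0:ℝ) < ((n : ℝ) + 1)⁻¹ := by positivity
    have hnotS : q₀ - ((n : ℝ) + 1)⁻¹ ∉ S := fun hmem => by
      have := csInf_le hSbdd hmem
      rw [← hq₀] at this
      linarith
    rw [hS, Set.mem_setOf_eq, not_le] at hnotS
    rw [← ENNReal.ofReal_toReal (hfin _)]
    exact ENNReal.ofReal_le_ofReal hnotS.le
  refine ⟨q, ⟨?_, ?_⟩, le_max_right _ _⟩
  · -- μ (Iio q) ≤ α
    rcases le_or_gt q₀ τ with hcase | hcase
    · have hqτ : q = τ := max_eq_right hcase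
      rw [hqτ]; exact h
    · have hqq : q = q₀ := max_eq_left hcase.le
      rw [hqq]
      exact ENNReal.toReal_le_of_le_ofReal hα.le hlower₀
  · -- α ≤ μ (Iic q)
    have : ENNReal.ofReal α ≤ μ (Set.Iic q) :=
      hupper₀.trans (measure_mono (Set.Iic_subset_Iic.2 (le_max_left _ _)))
    calc α = (ENNReal.ofReal α).toReal := (ENNReal.toReal_ofReal hα.le).symm
      _ ≤ (μ (Set.Iic q)).toReal := ENNReal.toReal_mono (hfin _) this

/-- the set of `α`-quantiles of the right-censored distribution `[F]_τ`
is contained in `{ min q τ : q an α-quantile of F }`. -/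
theorem censored_quantile_subset (μ : Measure ℝ) [IsProbabilityMeasure μ]
    (hsupp : μ (Set.Iio 0) = 0)
    (α τ : ℝ) (hα : 0 < α) (hα1 : α < 1) (hτ : 0 < τ) :
    {x : ℝ | IsAlphaQuantile (μ.map (fun t => min t τ)) α x} ⊆
      (fun q => min q τ) '' {q : ℝ | IsAlphaQuantile μ α q} := by
  intro x hx
  obtain ⟨h1, h2⟩ := hx
  have hm : Measurable fun t : ℝ => min t τ := measurable_id.min measurable_const
  rw [Measure.map_apply hm measurableSet_Iio] at h1
  rw [Measure.map_apply hm measurableSet_Iic] at h2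
  rcases lt_trichotomy x τ with hlt | heq | hgt
  · -- x < τ : x itself is a quantile of μ
    have hio : (fun t : ℝ => min t τ) ⁻¹' Set.Iio x = Set.Iio x := by
      ext t; simp only [Set.mem_preimage, Set.mem_Iio, min_lt_iff]
      constructor
      · rintro (ht | ht)
        · exact ht
        · linarith
      · exact Or.inl
    have hic : (fun t : ℝ => min t τ) ⁻¹' Set.Iic x = Set.Iic x := by
      ext t; simp only [Set.mem_preimage, Set.mem_Iic, min_le_iff]
      constructor
      · rintro (ht | ht)
        · exact ht
        · linarith
      · exact Or.inl
    rw [hio] at h1; rw [hic] at h2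
    exact ⟨x, ⟨h1, h2⟩, min_eq_left hlt.le⟩
  · -- x = τ
    subst heq
    have hio : (fun t : ℝ => min t x) ⁻¹' Set.Iio x = Set.Iio x := by
      ext t; simp [min_lt_iff]
    rw [hio] at h1
    obtain ⟨q, hq, hqτ⟩ := exists_quantile_ge μ hsupp hα hα1 h1
    exact ⟨q, hq, min_eq_right hqτ⟩
  · -- x > τ : impossible
    exfalso
    have hio : (fun t : ℝ => min t τ) ⁻¹' Set.Iio x = Set.univ := by
      ext t; simp only [Set.mem_preimage, Set.mem_Iio, Set.mem_univ, iff_true, min_lt_iff]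
      exact Or.inr hgt
    rw [hio, measure_univ] at h1
    simp at h1
    linarith
end

section
/- Suppose S is a strictly proper scoring rule relative to a class F* of probability distributions on an interval I = [0,∞), and F is a class of distributions on I such that the right-censored distribution [F]_τ belongs to F* whenever F ∈ F. Then the scoring rule S_τ defined by S_τ(F,t) = S([F]_τ, t) is provisionally strictly proper relative to F on [0,τ]: for all F, G in F, E_F S_τ(F, min(T,τ)) ≤ E_F S_τ(G, min(T,τ)) with equality if and only if [F]_τ = [G]_τ. -/
open MeasureTheory

/-- Change of variables for the censoring map `t ↦ min t τ`, valid for an arbitrary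
integrand `g` (both sides are `0` in the non-measurable case). -/
lemma integral_min_map (τ : ℝ) (F : Measure ℝ) (g : ℝ → ℝ) :
    (∫ t, g (min t τ) ∂F) = ∫ s, g s ∂(F.map (fun t => min t τ)) := by
  set φ : ℝ → ℝ := fun t => min t τ with hφdef
  have hφ : Measurable φ := measurable_id.min measurable_const
  by_cases hg : AEStronglyMeasurable g (F.map φ)
  · exact (integral_map hφ.aemeasurable hg).symm
  · rw [integral_non_aestronglyMeasurable hg, integral_non_aestronglyMeasurable]
    intro hc
    apply hg
    obtain ⟨h, hSM, hae⟩ := hc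
    set ND := toMeasurable F {t | g (min t τ) ≠ h t} with hNDdef
    have hNDm : MeasurableSet ND := measurableSet_toMeasurable _ _
    have hNDnull : F ND = 0 := by
      rw [measure_toMeasurable]
      exact hae
    refine ⟨fun s => if s < τ then h s else g τ, ?_, ?_⟩
    · exact StronglyMeasurable.ite measurableSet_Iio hSM stronglyMeasurable_const
    · rw [Filter.eventuallyEq_iff_exists_mem]
      refine ⟨((ND ∩ Set.Iio τ) ∪ Set.Ioi τ)ᶜ, ?_, ?_⟩
      · rw [mem_ae_iff, compl_compl]
        apply measure_union_null
        · rw [Measure.map_apply hφ (hNDm.inter measurableSet_Iio)]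
          refine measure_mono_null ?_ hNDnull
          intro t ht
          simp only [Set.mem_preimage, Set.mem_inter_iff, Set.mem_Iio] at ht
          have htτ : t < τ := by
            by_contra hcon
            exact absurd ht.2 (not_lt.mpr (by simp [φ, min_eq_right (le_of_not_gt hcon)]))
          have heq : φ t = t := min_eq_left htτ.le
          rw [heq] at ht
          exact ht.1
        · rw [Measure.map_apply hφ measurableSet_Ioi]
          convert measure_empty (μ := F)
          ext t
          simp [φ, min_le_right t τ, not_lt.mpr (min_le_right t τ)]
      · intro s hs
        simp only [Set.mem_compl_iff, Set.mem_union, Set.mem_inter_iff, Set.mem_Iio,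
          Set.mem_Ioi, not_or, not_and] at hs
        rcases lt_trichotomy s τ with hlt | heq | hgt
        · have hsND : s ∉ ND := fun hmem => hs.1 hmem hlt
          have : s ∉ {t | g (min t τ) ≠ h t} := fun hmem => hsND (subset_toMeasurable _ _ hmem)
          simp only [Set.mem_setOf_eq, not_not, min_eq_left hlt.le] at this
          simp [hlt, this]
        · simp [heq, lt_irrefl]
        · exact absurd hgt (by exact hs.2)

/-- Theorem 1: if `S` is a strictly proper scoring rule relative to a class
`𝓕s` of probability distributions on `[0,∞)` and `𝓕` is a class of distributions whose
right-censored versions lie in `𝓕s`, then the scoring rule `S_τ(F,t) = S([F]_τ, t)` is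
provisionally strictly proper relative to `𝓕` on `[0,τ]`. -/
theorem provisional_from_strictly_proper
    (τ : ℝ) (hτ : 0 < τ)
    (𝓕 𝓕s : Set (Measure ℝ))
    (hprob : ∀ F ∈ 𝓕, IsProbabilityMeasure F)
    (hsupp : ∀ F ∈ 𝓕, F (Set.Iio 0) = 0)
    (hclosed : ∀ F ∈ 𝓕, F.map (fun t => min t τ) ∈ 𝓕s)
    (S : Measure ℝ → ℝ → ℝ)
    (hproper : ∀ F ∈ 𝓕s, ∀ G ∈ 𝓕s,
      (∫ t, S F t ∂F) ≤ (∫ t, S G t ∂F) ∧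
      ((∫ t, S F t ∂F) = (∫ t, S G t ∂F) → F = G)) :
    ∀ F ∈ 𝓕, ∀ G ∈ 𝓕,
      (∫ t, S (F.map (fun t => min t τ)) (min t τ) ∂F) ≤
        (∫ t, S (G.map (fun t => min t τ)) (min t τ) ∂F) ∧
      ((∫ t, S (F.map (fun t => min t τ)) (min t τ) ∂F) =
        (∫ t, S (G.map (fun t => min t τ)) (min t τ) ∂F) →
        F.map (fun t => min t τ) = G.map (fun t => min t τ)) := by
  intro F hF G hG
  have h1 := integral_min_map τ F (S (F.map (fun t => min t τ)))
  have h2 := integral_min_map τ F (S (G.map (fun t => min t τ)))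
  have hp := hproper _ (hclosed F hF) _ (hclosed G hG)
  rw [h1, h2]
  exact hp
end

section
/- Let 0 < α < 1, let g : [0,∞) → ℝ be a function that is strictly increasing on [0,τ] for some τ > 0, and define S(x,t) = (1{min(x,τ) ≥ min(t,τ)} − α)(g(min(x,τ)) − g(min(t,τ))). Then for every probability distribution F on [0,∞) such that E_F g(min(T,τ)) is finite, every α-quantile u of F, and every x in [0,∞): E_F S(u, min(T,τ)) ≤ E_F S(x, min(T,τ)). -/
open MeasureTheory

/-- Pointwise key inequality, case `a ≤ b`. -/
lemma key_le (α τ : ℝ) (hα0 : 0 ≤ α) (hα1 : α ≤ 1) (g : ℝ → ℝ)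
    (hg : MonotoneOn g (Set.Icc 0 τ)) {a b m : ℝ}
    (ha : a ∈ Set.Icc 0 τ) (hb : b ∈ Set.Icc 0 τ) (hm : m ∈ Set.Icc 0 τ)
    (hab : a ≤ b) :
    ((if a ≥ m then (1:ℝ) else 0) - α) * (g a - g m)
      + ((if m ≤ a then (1:ℝ) else 0) - α) * (g b - g a)
      ≤ ((if b ≥ m then (1:ℝ) else 0) - α) * (g b - g m) := by
  have hgab : g a ≤ g b := hg ha hb hab
  by_cases h1 : m ≤ a
  · have h2 : m ≤ b := le_trans h1 hab
    simp only [ge_iff_le, if_pos h1, if_pos h2]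
    nlinarith
  · by_cases h2 : m ≤ b
    · have hmb : g m ≤ g b := hg hm hb h2
      simp only [ge_iff_le, if_neg h1, if_pos h2]
      nlinarith
    · simp only [ge_iff_le, if_neg h1, if_neg h2]
      nlinarith

/-- Pointwise key inequality, case `b ≤ a`. -/
lemma key_ge (α τ : ℝ) (hα0 : 0 ≤ α) (hα1 : α ≤ 1) (g : ℝ → ℝ)
    (hg : MonotoneOn g (Set.Icc 0 τ)) {a b m : ℝ}
    (ha : a ∈ Set.Icc 0 τ) (hb : b ∈ Set.Icc 0 τ) (hm : m ∈ Set.Icc 0 τ)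
    (hba : b ≤ a) :
    ((if a ≥ m then (1:ℝ) else 0) - α) * (g a - g m)
      + ((if m < a then (1:ℝ) else 0) - α) * (g b - g a)
      ≤ ((if b ≥ m then (1:ℝ) else 0) - α) * (g b - g m) := by
  have hgab : g b ≤ g a := hg hb ha hba
  by_cases h2 : m ≤ b
  · have h1 : m ≤ a := le_trans h2 hba
    have hmb : g m ≤ g b := hg hm hb h2
    by_cases h3 : m < a
    · simp only [ge_iff_le, if_pos h1, if_pos h2, if_pos h3]
      nlinarith
    · have hma : a ≤ m := not_lt.mp h3
      have hab' : g a ≤ g b := hg ha hb (le_trans hma h2)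
      have ham : g a ≤ g m := hg ha hm hma
      have hma' : g m ≤ g a := hg hm ha h1
      simp only [ge_iff_le, if_pos h1, if_pos h2, if_neg h3]
      nlinarith
  · by_cases h1 : m ≤ a
    · have hbm : g b ≤ g m := hg hb hm (le_of_not_ge h2)
      by_cases h3 : m < a
      · simp only [ge_iff_le, if_pos h1, if_neg h2, if_pos h3]
        nlinarith
      · have hma : a ≤ m := not_lt.mp h3
        have ham : g a ≤ g m := hg ha hm hma
        have hma' : g m ≤ g a := hg hm ha h1
        simp only [ge_iff_le, if_pos h1, if_neg h2, if_neg h3]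
        nlinarith
    · have h3 : ¬ m < a := fun h => h1 h.le
      simp only [ge_iff_le, if_neg h1, if_neg h2, if_neg h3]
      nlinarith

lemma main_aux (α τ : ℝ) (hα0 : 0 ≤ α) (hα1 : α ≤ 1) (hτ : 0 < τ)
    (g : ℝ → ℝ) (hg : MonotoneOn g (Set.Icc 0 τ))
    (μ : Measure ℝ) [IsProbabilityMeasure μ] (h0 : ∀ᵐ t ∂μ, 0 ≤ t)
    (hint : Integrable (fun t => g (min t τ)) μ)
    (a b : ℝ) (ha : a ∈ Set.Icc 0 τ) (hb : b ∈ Set.Icc 0 τ)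
    (hq1 : α ≤ (μ {t | min t τ ≤ a}).toReal)
    (hq2 : (μ {t | min t τ < a}).toReal ≤ α) :
    ∫ t, ((if a ≥ min t τ then (1:ℝ) else 0) - α) * (g a - g (min t τ)) ∂μ
      ≤ ∫ t, ((if b ≥ min t τ then (1:ℝ) else 0) - α) * (g b - g (min t τ)) ∂μ := by
  have hmin : Measurable fun t : ℝ => min t τ := measurable_id.min measurable_const
  have hintc : ∀ c : ℝ, Integrable
      (fun t => ((if c ≥ min t τ then (1:ℝ) else 0) - α) * (g c - g (min t τ))) μ := by
    intro c
    have h1 : Integrable (fun t => g c - g (min t τ)) μ := (integrable_const _).sub hint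
    have heq : (fun t => ((if c ≥ min t τ then (1:ℝ) else 0) - α) * (g c - g (min t τ)))
        = fun t => Set.indicator {t : ℝ | min t τ ≤ c} (fun t => g c - g (min t τ)) t
            - α * (g c - g (min t τ)) := by
      funext t
      simp only [ge_iff_le, Set.indicator_apply, Set.mem_setOf_eq]
      by_cases h : min t τ ≤ c
      · rw [if_pos h, if_pos h]; ring
      · rw [if_neg h, if_neg h]; ring
    rw [heq]
    exact (h1.indicator (hmin measurableSet_Iic)).sub (h1.const_mul α)
  have hmem : ∀ᵐ t ∂μ, min t τ ∈ Set.Icc 0 τ := by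
    filter_upwards [h0] with t ht
    exact ⟨le_min ht hτ.le, min_le_right _ _⟩
  rcases le_total a b with hab | hba
  · set C := g b - g a with hC
    have hCpos : 0 ≤ C := sub_nonneg.mpr (hg ha hb hab)
    set S : Set ℝ := {t | min t τ ≤ a} with hSdef
    have hS : MeasurableSet S := hmin measurableSet_Iic
    have hLrw : (fun t => ((if min t τ ≤ a then (1:ℝ) else 0) - α) * C)
        = fun t => S.indicator (fun _ => C) t - α * C := by
      funext t
      simp only [Set.indicator_apply, hSdef, Set.mem_setOf_eq]
      by_cases h : min t τ ≤ a
      · rw [if_pos h, if_pos h]; ring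
      · rw [if_neg h, if_neg h]; ring
    have hL : Integrable (fun t => ((if min t τ ≤ a then (1:ℝ) else 0) - α) * C) μ := by
      rw [hLrw]
      exact ((integrable_const C).indicator hS).sub (integrable_const _)
    have hLval : ∫ t, ((if min t τ ≤ a then (1:ℝ) else 0) - α) * C ∂μ
        = (μ S).toReal * C - α * C := by
      rw [hLrw, integral_sub ((integrable_const C).indicator hS) (integrable_const _),
        integral_indicator_const C hS, integral_const]
      simp [smul_eq_mul, measureReal_def]
    have hpt : ∀ᵐ t ∂μ,
        ((if a ≥ min t τ then (1:ℝ) else 0) - α) * (g a - g (min t τ))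
          + ((if min t τ ≤ a then (1:ℝ) else 0) - α) * C
          ≤ ((if b ≥ min t τ then (1:ℝ) else 0) - α) * (g b - g (min t τ)) := by
      filter_upwards [hmem] with t ht
      exact key_le α τ hα0 hα1 g hg ha hb ht hab
    have hmono := integral_mono_ae ((hintc a).add hL) (hintc b) hpt
    simp only [Pi.add_apply] at hmono
    rw [integral_add (hintc a) hL, hLval] at hmono
    nlinarith
  · set C := g b - g a with hC
    have hCneg : C ≤ 0 := sub_nonpos.mpr (hg hb ha hba)
    set S : Set ℝ := {t | min t τ < a} with hSdef
    have hS : MeasurableSet S := hmin measurableSet_Iio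
    have hLrw : (fun t => ((if min t τ < a then (1:ℝ) else 0) - α) * C)
        = fun t => S.indicator (fun _ => C) t - α * C := by
      funext t
      simp only [Set.indicator_apply, hSdef, Set.mem_setOf_eq]
      by_cases h : min t τ < a
      · rw [if_pos h, if_pos h]; ring
      · rw [if_neg h, if_neg h]; ring
    have hL : Integrable (fun t => ((if min t τ < a then (1:ℝ) else 0) - α) * C) μ := by
      rw [hLrw]
      exact ((integrable_const C).indicator hS).sub (integrable_const _)
    have hLval : ∫ t, ((if min t τ < a then (1:ℝ) else 0) - α) * C ∂μ
        = (μ S).toReal * C - α * C := by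
      rw [hLrw, integral_sub ((integrable_const C).indicator hS) (integrable_const _),
        integral_indicator_const C hS, integral_const]
      simp [smul_eq_mul, measureReal_def]
    have hpt : ∀ᵐ t ∂μ,
        ((if a ≥ min t τ then (1:ℝ) else 0) - α) * (g a - g (min t τ))
          + ((if min t τ < a then (1:ℝ) else 0) - α) * C
          ≤ ((if b ≥ min t τ then (1:ℝ) else 0) - α) * (g b - g (min t τ)) := by
      filter_upwards [hmem] with t ht
      exact key_ge α τ hα0 hα1 g hg ha hb ht hba
    have hmono := integral_mono_ae ((hintc a).add hL) (hintc b) hpt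
    simp only [Pi.add_apply] at hmono
    rw [integral_add (hintc a) hL, hLval] at hmono
    nlinarith

/-- provisional consistency of the threshold-weighted quantile score:
for `g` strictly increasing on `[0,τ]` and
`S(x,t) = (1{min x τ ≥ min t τ} − α)(g(min x τ) − g(min t τ))`, every `α`-quantile `u`
of `F` minimizes the expected score against the right-censored realization. -/
theorem quantile_provisionally_consistent
    (α τ : ℝ) (hα : 0 < α) (hα1 : α < 1) (hτ : 0 < τ)
    (g : ℝ → ℝ) (hg : StrictMonoOn g (Set.Icc 0 τ))
    (μ : Measure ℝ) [IsProbabilityMeasure μ] (hsupp : μ (Set.Iio 0) = 0)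
    (hint : Integrable (fun t => g (min t τ)) μ)
    (u : ℝ) (hu : IsAlphaQuantile μ α u)
    (x : ℝ) (hx : 0 ≤ x) :
    (∫ t, ((if min u τ ≥ min t τ then (1 : ℝ) else 0) - α) *
        (g (min u τ) - g (min t τ)) ∂μ) ≤
      ∫ t, ((if min x τ ≥ min t τ then (1 : ℝ) else 0) - α) *
        (g (min x τ) - g (min t τ)) ∂μ := by
  have hu0 : 0 ≤ u := by
    by_contra h
    push_neg at h
    have hsub : Set.Iic u ⊆ Set.Iio 0 := fun t ht => lt_of_le_of_lt ht h
    have hz : μ (Set.Iic u) = 0 := measure_mono_null hsub hsupp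
    have h2 := hu.2
    rw [hz] at h2
    simp at h2
    linarith
  have h0 : ∀ᵐ t ∂μ, 0 ≤ t := by
    have hset : {t : ℝ | ¬ 0 ≤ t} = Set.Iio 0 := by ext t; simp [not_le]
    rw [ae_iff, hset]; exact hsupp
  refine main_aux α τ hα.le hα1.le hτ g hg.monotoneOn μ h0 hint (min u τ) (min x τ)
    ⟨le_min hu0 hτ.le, min_le_right _ _⟩ ⟨le_min hx hτ.le, min_le_right _ _⟩ ?_ ?_
  · refine le_trans hu.2 (ENNReal.toReal_mono (measure_ne_top μ _) (measure_mono ?_))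
    intro t ht
    simp only [Set.mem_setOf_eq]
    exact min_le_min (Set.mem_Iic.mp ht) (le_refl τ)
  · refine le_trans (ENNReal.toReal_mono (measure_ne_top μ _) (measure_mono ?_)) hu.1
    intro t ht
    simp only [Set.mem_setOf_eq, Set.mem_Iio] at ht ⊢
    by_contra h
    push_neg at h
    exact absurd (min_le_min h le_rfl) (not_le.mpr ht)
end

section
/- The mean functional is not provisionally elicitable on [0,τ] relative to any class F of probability distributions on [0,∞) that contains all distributions with densities, finite support (i.e., supported in a bounded interval), and finite m-th moment: there exist two distributions F₁ and F₂ with densities and bounded support such that their means are distinct, both means lie in (0,τ), and min(T,τ) has the same distribution under F₁ and F₂. -/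
open MeasureTheory

lemma integrable_ind (a b c : ℝ) :
    Integrable ((Set.Ico a b).indicator (fun _ => c)) := by
  rw [integrable_indicator_iff measurableSet_Ico]
  exact integrableOn_const measure_Ico_lt_top.ne

lemma integral_ind (a b c : ℝ) (hab : a ≤ b) :
    ∫ s, (Set.Ico a b).indicator (fun _ => c) s = c * (b - a) := by
  rw [integral_indicator measurableSet_Ico, setIntegral_const, measureReal_def, Real.volume_Ico,
    ENNReal.toReal_ofReal (by linarith)]
  rw [smul_eq_mul]; ring

lemma id_ind_eq (a b c : ℝ) :
    (fun s => s * (Set.Ico a b).indicator (fun _ => c) s)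
      = (Set.Ico a b).indicator (fun s => s * c) := by
  ext s; by_cases h : s ∈ Set.Ico a b <;> simp [h]

lemma integrable_id_ind (a b c : ℝ) :
    Integrable (fun s => s * (Set.Ico a b).indicator (fun _ => c) s) := by
  rw [id_ind_eq, integrable_indicator_iff measurableSet_Ico]
  exact ((continuous_id.mul continuous_const).integrableOn_Icc).mono_set
    Set.Ico_subset_Icc_self

lemma integral_id_ind (a b c : ℝ) (hab : a ≤ b) :
    ∫ s, s * (Set.Ico a b).indicator (fun _ => c) s = c * (b^2 - a^2) / 2 := by
  rw [id_ind_eq, integral_indicator measurableSet_Ico,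
    setIntegral_congr_set (Ico_ae_eq_Ioc (α := ℝ) (μ := volume)),
    ← intervalIntegral.integral_of_le hab, intervalIntegral.integral_mul_const,
    integral_id]
  ring

lemma map_min_eq_of {τ : ℝ} {f₁ f₂ : ℝ → ℝ} (h₁ : Measurable f₁) (h₂ : Measurable f₂)
    (heq : ∀ s, s < τ → f₁ s = f₂ s)
    (ht₁ : ∫⁻ s, ENNReal.ofReal (f₁ s) = 1)
    (ht₂ : ∫⁻ s, ENNReal.ofReal (f₂ s) = 1) :
    (volume.withDensity fun s => ENNReal.ofReal (f₁ s)).map (fun t => min t τ) =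
      (volume.withDensity fun s => ENNReal.ofReal (f₂ s)).map (fun t => min t τ) := by
  have hmin : Measurable fun t : ℝ => min t τ := measurable_id.min measurable_const
  classical
  have key : ∀ f : ℝ → ℝ, Measurable f → (∫⁻ s, ENNReal.ofReal (f s)) = 1 →
      ∀ A : Set ℝ, MeasurableSet A →
      (volume.withDensity fun s => ENNReal.ofReal (f s)).map (fun t => min t τ) A
        = (∫⁻ s in A ∩ Set.Iio τ, ENNReal.ofReal (f s))
          + (if τ ∈ A then 1 - ∫⁻ s in Set.Iio τ, ENNReal.ofReal (f s) else 0) := by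
    classical
    intro f hf htot A hA
    rw [Measure.map_apply hmin hA,
      withDensity_apply _ (hmin hA)]
    have hsplit : (fun t : ℝ => min t τ) ⁻¹' A
        = (A ∩ Set.Iio τ) ∪ (if τ ∈ A then Set.Ici τ else ∅) := by
      ext t
      by_cases ht : t < τ
      · simp [Set.mem_preimage, min_eq_left ht.le, ht, not_le.2 ht]
      · push_neg at ht
        by_cases hτA : τ ∈ A <;>
          simp [Set.mem_preimage, min_eq_right ht, hτA, ht, not_lt.2 ht]
    rw [hsplit]
    have hdisj : Disjoint (A ∩ Set.Iio τ) (if τ ∈ A then Set.Ici τ else ∅) := by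
      by_cases hτA : τ ∈ A
      · simpa [hτA] using
          Set.disjoint_of_subset_left Set.inter_subset_right (Set.Iio_disjoint_Ici le_rfl)
      · simp [hτA]
    have hmeas2 : MeasurableSet (if τ ∈ A then Set.Ici τ else ∅) := by
      by_cases hτA : τ ∈ A <;> simp [hτA]
    rw [lintegral_union hmeas2 hdisj]
    congr 1
    by_cases hτA : τ ∈ A
    · simp only [hτA, if_true]
      have hcompl := lintegral_add_compl (μ := volume)
        (fun s => ENNReal.ofReal (f s)) (measurableSet_Iio (a := τ))
      rw [Set.compl_Iio, htot] at hcompl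
      refine ENNReal.eq_sub_of_add_eq ?_ ?_
      · exact ne_top_of_le_ne_top ENNReal.one_ne_top
          (le_of_le_of_eq le_add_self (by rw [add_comm] at hcompl; exact hcompl))
      · rw [add_comm]; exact hcompl
    · simp [hτA]
  ext A hA
  rw [key f₁ h₁ ht₁ A hA, key f₂ h₂ ht₂ A hA]
  have hIio : ∀ B : Set ℝ, B ⊆ Set.Iio τ → MeasurableSet B →
      ∫⁻ s in B, ENNReal.ofReal (f₁ s) = ∫⁻ s in B, ENNReal.ofReal (f₂ s) := by
    intro B hB hBm
    refine setLIntegral_congr_fun hBm (fun s hs => ?_)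
    rw [heq s (hB hs)]
  rw [hIio _ Set.inter_subset_right (hA.inter measurableSet_Iio),
    hIio _ le_rfl measurableSet_Iio]

/-- Corollary: the mean functional is not provisionally elicitable:
for every `τ > 0` there exist two distributions `F₁, F₂` on `[0,∞)` with (measurable,
nonnegative) densities and bounded support, whose means are distinct, both lie in
`(0,τ)`, and such that the laws of `min(T,τ)` under `F₁` and `F₂` coincide. -/
theorem mean_not_provisionally_elicitable_witness (τ : ℝ) (hτ : 0 < τ) :
    ∃ f₁ f₂ : ℝ → ℝ,
      Measurable f₁ ∧ Measurable f₂ ∧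
      (∀ s, 0 ≤ f₁ s) ∧ (∀ s, 0 ≤ f₂ s) ∧
      (∃ b : ℝ, ∀ s, (s < 0 ∨ b < s) → f₁ s = 0 ∧ f₂ s = 0) ∧
      (∫ s, f₁ s) = 1 ∧ (∫ s, f₂ s) = 1 ∧
      (∫ s, s * f₁ s) ∈ Set.Ioo 0 τ ∧
      (∫ s, s * f₂ s) ∈ Set.Ioo 0 τ ∧
      (∫ s, s * f₁ s) ≠ (∫ s, s * f₂ s) ∧
      (volume.withDensity fun s => ENNReal.ofReal (f₁ s)).map (fun t => min t τ) =
        (volume.withDensity fun s => ENNReal.ofReal (f₂ s)).map (fun t => min t τ) := by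
  have hτ0 : τ ≠ 0 := ne_of_gt hτ
  set f₁ : ℝ → ℝ := fun s => (Set.Ico 0 τ).indicator (fun _ => 1/(2*τ)) s
    + (Set.Ico τ (5*τ/4)).indicator (fun _ => 2/τ) s with hf₁def
  set f₂ : ℝ → ℝ := fun s => (Set.Ico 0 τ).indicator (fun _ => 1/(2*τ)) s
    + (Set.Ico τ (3*τ/2)).indicator (fun _ => 1/τ) s with hf₂def
  have hm₁ : Measurable f₁ :=
    ((measurable_const.indicator measurableSet_Ico).add
      (measurable_const.indicator measurableSet_Ico))
  have hm₂ : Measurable f₂ :=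
    ((measurable_const.indicator measurableSet_Ico).add
      (measurable_const.indicator measurableSet_Ico))
  have hn₁ : ∀ s, 0 ≤ f₁ s := fun s =>
    add_nonneg (Set.indicator_nonneg (fun _ _ => by positivity) s)
      (Set.indicator_nonneg (fun _ _ => by positivity) s)
  have hn₂ : ∀ s, 0 ≤ f₂ s := fun s =>
    add_nonneg (Set.indicator_nonneg (fun _ _ => by positivity) s)
      (Set.indicator_nonneg (fun _ _ => by positivity) s)
  have hsupp : ∀ s : ℝ, (s < 0 ∨ 3*τ/2 < s) → f₁ s = 0 ∧ f₂ s = 0 := by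
    intro s hs
    have h1 : s ∉ Set.Ico 0 τ := by
      rcases hs with h | h <;> simp [Set.mem_Ico] <;> intro h' <;> linarith
    have h2 : s ∉ Set.Ico τ (5*τ/4) := by
      rcases hs with h | h <;> simp [Set.mem_Ico] <;> intro h' <;> linarith
    have h3 : s ∉ Set.Ico τ (3*τ/2) := by
      rcases hs with h | h <;> simp [Set.mem_Ico] <;> intro h' <;> linarith
    constructor <;> simp [hf₁def, hf₂def, Set.indicator_of_notMem, h1, h2, h3]
  have hint₁ : (∫ s, f₁ s) = 1 := by
    rw [hf₁def, integral_add (integrable_ind _ _ _) (integrable_ind _ _ _),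
      integral_ind _ _ _ hτ.le, integral_ind _ _ _ (by linarith)]
    field_simp; ring
  have hint₂ : (∫ s, f₂ s) = 1 := by
    rw [hf₂def, integral_add (integrable_ind _ _ _) (integrable_ind _ _ _),
      integral_ind _ _ _ hτ.le, integral_ind _ _ _ (by linarith)]
    field_simp; ring
  have hmean₁ : (∫ s, s * f₁ s) = 13*τ/16 := by
    have : (fun s => s * f₁ s) = fun s =>
        s * (Set.Ico 0 τ).indicator (fun _ => 1/(2*τ)) s
          + s * (Set.Ico τ (5*τ/4)).indicator (fun _ => 2/τ) s := by
      ext s; rw [hf₁def]; ring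
    rw [this, integral_add (integrable_id_ind _ _ _) (integrable_id_ind _ _ _),
      integral_id_ind _ _ _ hτ.le, integral_id_ind _ _ _ (by linarith)]
    field_simp; ring
  have hmean₂ : (∫ s, s * f₂ s) = 7*τ/8 := by
    have : (fun s => s * f₂ s) = fun s =>
        s * (Set.Ico 0 τ).indicator (fun _ => 1/(2*τ)) s
          + s * (Set.Ico τ (3*τ/2)).indicator (fun _ => 1/τ) s := by
      ext s; rw [hf₂def]; ring
    rw [this, integral_add (integrable_id_ind _ _ _) (integrable_id_ind _ _ _),
      integral_id_ind _ _ _ hτ.le, integral_id_ind _ _ _ (by linarith)]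
    field_simp; ring
  refine ⟨f₁, f₂, hm₁, hm₂, hn₁, hn₂, ⟨3*τ/2, hsupp⟩, hint₁, hint₂, ?_, ?_, ?_, ?_⟩
  · rw [hmean₁]; constructor <;> [linarith; linarith]
  · rw [hmean₂]; constructor <;> [linarith; linarith]
  · rw [hmean₁, hmean₂]; intro h; nlinarith
  · have hl : ∀ (f : ℝ → ℝ), (∀ s, 0 ≤ f s) → Integrable f → (∫ s, f s) = 1 →
        ∫⁻ s, ENNReal.ofReal (f s) = 1 := by
      intro f hn hi h1
      rw [← ofReal_integral_eq_lintegral_ofReal hi (ae_of_all _ hn), h1, ENNReal.ofReal_one]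
    have hint₁' : Integrable f₁ := (integrable_ind _ _ _).add (integrable_ind _ _ _)
    have hint₂' : Integrable f₂ := (integrable_ind _ _ _).add (integrable_ind _ _ _)
    refine map_min_eq_of hm₁ hm₂ ?_ (hl f₁ hn₁ hint₁' hint₁) (hl f₂ hn₂ hint₂' hint₂)
    intro s hs
    have h2 : s ∉ Set.Ico τ (5*τ/4) := by simp [Set.mem_Ico]; intro h'; linarith
    have h3 : s ∉ Set.Ico τ (3*τ/2) := by simp [Set.mem_Ico]; intro h'; linarith
    simp [hf₁def, hf₂def, Set.indicator_of_notMem, h2, h3]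
end

section
/- Let τ < a < 2τ with τ > 0. The function f₂(s) = 1/a on [0,τ], f₂(s) = (2/a)(1 − (s−τ)/(a−τ)) on (τ,a], and 0 elsewhere is a probability density on [0,∞), its CDF agrees with the uniform CDF F₁(s) = s/a on [0,τ), and its mean satisfies 0 < ∫ s f₂(s) ds < a/2. -/
open MeasureTheory

/-- for `0 < τ < a < 2τ`, the function `f₂` given by `f₂(s) = 1/a` on
`[0,τ]`, `f₂(s) = (2/a)(1 − (s−τ)/(a−τ))` on `(τ,a]` and `0` elsewhere is a probability
density on `[0,∞)`, its CDF agrees with the uniform CDF `s ↦ s/a` on `[0,τ)`, and its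
mean satisfies `0 < ∫ s f₂(s) ds < a/2`. -/
theorem density_f2_properties (τ a : ℝ) (hτ : 0 < τ) (hτa : τ < a) (ha : a < 2 * τ) :
    let f₂ : ℝ → ℝ := fun s =>
      if s < 0 then 0
      else if s ≤ τ then 1 / a
      else if s ≤ a then (2 / a) * (1 - (s - τ) / (a - τ))
      else 0
    (∀ s, 0 ≤ f₂ s) ∧ (∫ s, f₂ s) = 1 ∧
      (∀ s, 0 ≤ s → s < τ → (∫ x in Set.Iic s, f₂ x) = s / a) ∧
      0 < (∫ s, s * f₂ s) ∧ (∫ s, s * f₂ s) < a / 2 := by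
  intro f₂
  have ha0 : 0 < a := hτ.trans hτa
  have hb : 0 < a - τ := sub_pos.2 hτa
  -- pointwise descriptions
  have he1 : Set.EqOn f₂ (fun _ => 1 / a) (Set.Ioc 0 τ) := by
    intro x hx
    simp only [f₂, if_neg (not_lt.2 hx.1.le), if_pos hx.2]
  have he2 : Set.EqOn f₂ (fun x => 2 / a * (1 - (x - τ) / (a - τ))) (Set.Ioc τ a) := by
    intro x hx
    have h0 : ¬ x < 0 := not_lt.2 (le_trans hτ.le hx.1.le)
    simp only [f₂, if_neg h0, if_neg (not_le.2 hx.1), if_pos hx.2]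
  have he0 : Set.EqOn f₂ (fun _ => (0:ℝ)) (Set.Iio 0) := by
    intro x hx
    have hx' : x < 0 := hx
    simp only [f₂, if_pos hx']
  have hsupp : ∀ x, x ∉ Set.Icc 0 a → f₂ x = 0 := by
    intro x hx
    simp only [Set.mem_Icc, not_and_or, not_le] at hx
    rcases hx with h | h
    · simp only [f₂, if_pos h]
    · have h1 : ¬ x < 0 := not_lt.2 (le_trans ha0.le h.le)
      have h2 : ¬ x ≤ τ := not_le.2 (hτa.trans h)
      simp only [f₂, if_neg h1, if_neg h2, if_neg (not_le.2 h)]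
  -- integrability of pieces
  have hc1 : Continuous (fun _ : ℝ => 1 / a) := continuous_const
  have hc2 : Continuous fun x : ℝ => 2 / a * (1 - (x - τ) / (a - τ)) := by
    have : Continuous fun x : ℝ => (x - τ) / (a - τ) := (continuous_id.sub continuous_const).div_const _
    exact continuous_const.mul (continuous_const.sub this)
  have hi1 : IntegrableOn f₂ (Set.Ioc 0 τ) :=
    (hc1.integrableOn_Ioc).congr_fun he1.symm measurableSet_Ioc
  have hi2 : IntegrableOn f₂ (Set.Ioc τ a) :=
    (hc2.integrableOn_Ioc).congr_fun he2.symm measurableSet_Ioc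
  have hdisj : Disjoint (Set.Ioc 0 τ) (Set.Ioc τ a) :=
    Set.disjoint_left.2 fun x hx hx' => absurd hx.2 (not_le.2 hx'.1)
  -- generic polynomial interval integrals
  have hkey : ∀ u v c d e : ℝ, (∫ x in u..v, (c + d * x + e * x ^ 2)) =
      c * (v - u) + d * (v ^ 2 - u ^ 2) / 2 + e * (v ^ 3 - u ^ 3) / 3 := by
    intro u v c d e
    have i1 : IntervalIntegrable (fun _ : ℝ => c) volume u v := intervalIntegrable_const
    have i2 : IntervalIntegrable (fun x : ℝ => d * x) volume u v :=
      (continuous_const.mul continuous_id).intervalIntegrable _ _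
    have i3 : IntervalIntegrable (fun x : ℝ => e * x ^ 2) volume u v :=
      (continuous_const.mul (continuous_pow 2)).intervalIntegrable _ _
    rw [intervalIntegral.integral_add (i1.add i2) i3, intervalIntegral.integral_add i1 i2,
      intervalIntegral.integral_const, intervalIntegral.integral_const_mul,
      intervalIntegral.integral_const_mul, _root_.integral_id,
      _root_.integral_pow, smul_eq_mul]
    push_cast
    ring
  -- piece integrals of f₂
  have hP1 : (∫ x in Set.Ioc 0 τ, f₂ x) = τ / a := by
    rw [setIntegral_congr_fun measurableSet_Ioc he1, setIntegral_const,
      Real.volume_real_Ioc_of_le hτ.le, smul_eq_mul]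
    ring
  have hP2 : (∫ x in Set.Ioc τ a, f₂ x) = (a - τ) / a := by
    rw [setIntegral_congr_fun measurableSet_Ioc he2, ← intervalIntegral.integral_of_le hτa.le]
    have hfe : (fun x : ℝ => 2 / a * (1 - (x - τ) / (a - τ))) =
        fun x => (2 / a + 2 * τ / (a * (a - τ))) + (-(2 / (a * (a - τ)))) * x + 0 * x ^ 2 := by
      funext x
      field_simp
      ring
    rw [hfe, hkey]
    field_simp
    ring
  -- total integral of f₂
  have hind : f₂ = (Set.Icc 0 a).indicator f₂ := by
    funext x
    by_cases hx : x ∈ Set.Icc 0 a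
    · rw [Set.indicator_of_mem hx]
    · rw [Set.indicator_of_notMem hx, hsupp x hx]
  have hsplit : (∫ s, f₂ s) = (∫ x in Set.Ioc 0 τ, f₂ x) + ∫ x in Set.Ioc τ a, f₂ x := by
    conv_lhs => rw [hind]
    rw [ integral_indicator measurableSet_Icc, integral_Icc_eq_integral_Ioc,
      ← Set.Ioc_union_Ioc_eq_Ioc hτ.le hτa.le,
      setIntegral_union hdisj measurableSet_Ioc hi1 hi2]
  -- mean pieces
  have hm1 : Set.EqOn (fun x => x * f₂ x) (fun x => 0 + (1 / a) * x + 0 * x ^ 2) (Set.Ioc 0 τ) := by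
    intro x hx
    simp only [he1 hx]
    ring
  have hm2 : Set.EqOn (fun x => x * f₂ x)
      (fun x => 0 + (2 / (a - τ)) * x + (-(2 / (a * (a - τ)))) * x ^ 2) (Set.Ioc τ a) := by
    intro x hx
    simp only [he2 hx]
    field_simp
    ring
  have hmc1 : Continuous fun x : ℝ => 0 + (1 / a) * x + 0 * x ^ 2 := by
    exact (continuous_const.add (continuous_const.mul continuous_id)).add
      (continuous_const.mul (continuous_pow 2))
  have hmc2 : Continuous fun x : ℝ => 0 + (2 / (a - τ)) * x + (-(2 / (a * (a - τ)))) * x ^ 2 := by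
    exact (continuous_const.add (continuous_const.mul continuous_id)).add
      (continuous_const.mul (continuous_pow 2))
  have hmi1 : IntegrableOn (fun x => x * f₂ x) (Set.Ioc 0 τ) :=
    (hmc1.integrableOn_Ioc).congr_fun hm1.symm measurableSet_Ioc
  have hmi2 : IntegrableOn (fun x => x * f₂ x) (Set.Ioc τ a) :=
    (hmc2.integrableOn_Ioc).congr_fun hm2.symm measurableSet_Ioc
  have hmind : (fun x => x * f₂ x) = (Set.Icc 0 a).indicator (fun x => x * f₂ x) := by
    funext x
    by_cases hx : x ∈ Set.Icc 0 a
    · rw [Set.indicator_of_mem hx]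
    · rw [Set.indicator_of_notMem hx, hsupp x hx, mul_zero]
  have hQ1 : (∫ x in Set.Ioc 0 τ, x * f₂ x) = τ ^ 2 / (2 * a) := by
    rw [setIntegral_congr_fun measurableSet_Ioc hm1, ← intervalIntegral.integral_of_le hτ.le, hkey]
    field_simp
    ring
  have hQ2 : (∫ x in Set.Ioc τ a, x * f₂ x) =
      (2 / (a - τ)) * (a ^ 2 - τ ^ 2) / 2 + (-(2 / (a * (a - τ)))) * (a ^ 3 - τ ^ 3) / 3 := by
    rw [setIntegral_congr_fun measurableSet_Ioc hm2, ← intervalIntegral.integral_of_le hτa.le, hkey]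
    ring
  have hmean : (∫ s, s * f₂ s) = (2 * a ^ 2 + 2 * a * τ - τ ^ 2) / (6 * a) := by
    conv_lhs => rw [hmind]
    rw [ integral_indicator measurableSet_Icc, integral_Icc_eq_integral_Ioc,
      ← Set.Ioc_union_Ioc_eq_Ioc hτ.le hτa.le,
      setIntegral_union hdisj measurableSet_Ioc hmi1 hmi2, hQ1, hQ2]
    field_simp
    ring
  refine ⟨?_, ?_, ?_, ?_, ?_⟩
  · -- nonnegativity
    intro s
    simp only [f₂]
    split_ifs with h1 h2 h3
    · exact le_refl 0
    · exact div_nonneg zero_le_one ha0.le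
    · have hle : (s - τ) / (a - τ) ≤ 1 := (div_le_one hb).2 (by linarith)
      exact mul_nonneg (div_nonneg (by norm_num) ha0.le) (by linarith)
    · exact le_refl 0
  · rw [hsplit, hP1, hP2]
    field_simp
    ring
  · -- CDF
    intro s hs0 hsτ
    have hun : Set.Iic s = Set.Iio 0 ∪ Set.Icc 0 s := by
      ext x
      simp only [Set.mem_Iic, Set.mem_union, Set.mem_Iio, Set.mem_Icc]
      constructor
      · intro h
        rcases lt_or_ge x 0 with h' | h'
        · exact Or.inl h'
        · exact Or.inr ⟨h', h⟩
      · rintro (h | ⟨_, h⟩)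
        · linarith
        · exact h
    have hi0 : IntegrableOn f₂ (Set.Iio 0) :=
      (integrableOn_zero).congr_fun he0.symm measurableSet_Iio
    have hiIccs : IntegrableOn f₂ (Set.Icc 0 s) := by
      rw [integrableOn_Icc_iff_integrableOn_Ioc]
      exact hi1.mono_set (Set.Ioc_subset_Ioc le_rfl hsτ.le)
    have hdisj0 : Disjoint (Set.Iio 0) (Set.Icc 0 s) :=
      Set.disjoint_left.2 fun x hx hx' => absurd hx'.1 (not_le.2 hx)
    rw [hun, setIntegral_union hdisj0 measurableSet_Icc hi0 hiIccs,
      setIntegral_congr_fun measurableSet_Iio he0, integral_zero, zero_add,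
      integral_Icc_eq_integral_Ioc,
      setIntegral_congr_fun measurableSet_Ioc (he1.mono (Set.Ioc_subset_Ioc le_rfl hsτ.le)),
      setIntegral_const, Real.volume_real_Ioc_of_le hs0,
      smul_eq_mul]
    ring
  · rw [hmean]
    apply div_pos (by nlinarith) (by linarith)
  · rw [hmean, div_lt_div_iff₀ (by linarith) (by norm_num : (0:ℝ) < 2)]
    nlinarith [sq_nonneg (a - τ)]
end

section
/- Let w(s) = 1{0 ≤ s ≤ τ} and v(x) = min(x,τ). Then for any probability distribution F on [0,∞) and any t ≥ 0, the threshold-weighted CRPS satisfies ∫_0^τ (1{s ≥ t} − F(s))² ds = E_F |min(X,τ) − min(t,τ)| − (1/2) E_F |min(X,τ) − min(X',τ)|, where X and X' are independent with distribution F. -/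
open MeasureTheory
open Set

noncomputable def hh (s a : ℝ) : ℝ := if a ≤ s then 1 else 0

lemma hh_meas (a : ℝ) : Measurable (fun s => hh s a) := by
  unfold hh
  exact Measurable.ite measurableSet_Ici measurable_const measurable_const

lemma hh_joint : Measurable (fun q : ℝ × ℝ => hh q.1 q.2) := by
  unfold hh
  exact Measurable.ite (measurableSet_le measurable_snd measurable_fst)
    measurable_const measurable_const

lemma hh_diff_abs_le (s a b : ℝ) : |hh s a - hh s b| ≤ 1 := by
  unfold hh; split_ifs <;> norm_num

lemma sq_meas (a b : ℝ) : Measurable (fun s => (hh s a - hh s b) ^ 2) :=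
  ((hh_meas a).sub (hh_meas b)).pow_const 2

instance ioc_fin (τ : ℝ) : IsFiniteMeasure (volume.restrict (Ioc (0:ℝ) τ)) :=
  ⟨by rw [Measure.restrict_apply_univ, Real.volume_Ioc]; exact ENNReal.ofReal_lt_top⟩

lemma sq_integrable (τ a b : ℝ) :
    Integrable (fun s => (hh s a - hh s b) ^ 2) (volume.restrict (Ioc 0 τ)) := by
  refine Integrable.mono' (integrable_const 1) (sq_meas a b).aestronglyMeasurable ?_
  refine Filter.Eventually.of_forall fun s => ?_
  rw [Real.norm_eq_abs, abs_pow]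
  calc |hh s a - hh s b| ^ 2 ≤ 1 ^ 2 :=
        pow_le_pow_left₀ (abs_nonneg _) (hh_diff_abs_le s a b) 2
    _ = 1 := one_pow 2

lemma lemA_le (τ a b : ℝ) (ha : 0 ≤ a) (hab : a ≤ b) :
    ∫ s in Ioc 0 τ, (hh s a - hh s b) ^ 2 = |min a τ - min b τ| := by
  have hfun : ∀ s, (hh s a - hh s b) ^ 2 = (Ico a b).indicator (fun _ => (1:ℝ)) s := by
    intro s
    unfold hh
    rw [Set.indicator_apply]
    by_cases h1 : a ≤ s <;> by_cases h2 : b ≤ s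
    · simp [Set.mem_Ico, h1, h2, not_lt.mpr h2]
    · simp [Set.mem_Ico, h1, h2, not_le.mp h2]
    · exact absurd (hab.trans h2) h1
    · simp [Set.mem_Ico, h1, h2, lt_of_lt_of_le (not_le.mp h1) hab]
  simp_rw [hfun]
  rw [setIntegral_indicator measurableSet_Ico, setIntegral_const]
  have hmeascongr : volume (Ioc 0 τ ∩ Ico a b) = volume (Ioc 0 τ ∩ Ioc a b) := by
    apply measure_congr
    apply Filter.EventuallyEq.inter (Filter.EventuallyEq.refl _ _)
    exact Ico_ae_eq_Ioc
  rw [measureReal_def, hmeascongr, Set.Ioc_inter_Ioc, Real.volume_Ioc, smul_eq_mul, mul_one,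
    ENNReal.toReal_ofReal', sup_eq_right.mpr ha, abs_sub_comm,
    abs_of_nonneg (sub_nonneg.mpr (min_le_min hab le_rfl))]
  rcases le_total a τ with h | h
  · rw [min_eq_left h, min_comm τ b]
    exact max_eq_left (sub_nonneg.mpr (le_min hab h))
  · rw [min_eq_right h, min_eq_right (h.trans hab)]
    rw [max_eq_right (by simp only [sub_nonpos]; exact (inf_le_left).trans h)]
    ring

lemma lemA (τ a b : ℝ) (ha : 0 ≤ a) (hb : 0 ≤ b) :
    ∫ s in Ioc 0 τ, (hh s a - hh s b) ^ 2 = |min a τ - min b τ| := by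
  rcases le_total a b with h | h
  · exact lemA_le τ a b ha h
  · have hs : ∀ s : ℝ, (hh s a - hh s b) ^ 2 = (hh s b - hh s a) ^ 2 := fun s => by ring
    simp_rw [hs]
    rw [lemA_le τ b a hb h, abs_sub_comm]

noncomputable def gg (t s : ℝ) (p : ℝ × ℝ) : ℝ := (hh s t - hh s p.1) * (hh s t - hh s p.2)

lemma gg_int (τ t : ℝ) (μ : Measure ℝ) [IsProbabilityMeasure μ] :
    Integrable (Function.uncurry (gg t)) ((volume.restrict (Ioc 0 τ)).prod (μ.prod μ)) := by
  have hmeas : Measurable (Function.uncurry (gg t)) := by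
    unfold Function.uncurry gg
    have h1 : Measurable (fun z : ℝ × (ℝ × ℝ) => hh z.1 t) :=
      hh_joint.comp (measurable_fst.prodMk measurable_const)
    have h2 : Measurable (fun z : ℝ × (ℝ × ℝ) => hh z.1 z.2.1) :=
      hh_joint.comp (measurable_fst.prodMk (measurable_fst.comp measurable_snd))
    have h3 : Measurable (fun z : ℝ × (ℝ × ℝ) => hh z.1 z.2.2) :=
      hh_joint.comp (measurable_fst.prodMk (measurable_snd.comp measurable_snd))
    exact (h1.sub h2).mul (h1.sub h3)
  refine Integrable.mono' (integrable_const 1) hmeas.aestronglyMeasurable ?_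
  refine Filter.Eventually.of_forall fun z => ?_
  rw [Real.norm_eq_abs]
  unfold Function.uncurry gg
  rw [abs_mul]
  exact mul_le_one₀ (hh_diff_abs_le _ _ _) (abs_nonneg _) (hh_diff_abs_le _ _ _)

lemma inner_eval (τ t a b : ℝ) (ht : 0 ≤ t) (ha : 0 ≤ a) (hb : 0 ≤ b) :
    ∫ s in Ioc 0 τ, gg t s (a, b) =
      (|min t τ - min a τ| + |min t τ - min b τ| - |min a τ - min b τ|) / 2 := by
  have hs : ∀ s : ℝ, gg t s (a, b) =
      ((hh s t - hh s a) ^ 2 + (hh s t - hh s b) ^ 2 - (hh s a - hh s b) ^ 2) / 2 := by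
    intro s; unfold gg; dsimp only; ring
  simp_rw [hs]
  have hAB : Integrable (fun s => (hh s t - hh s a) ^ 2 + (hh s t - hh s b) ^ 2)
      (volume.restrict (Ioc 0 τ)) := (sq_integrable τ t a).add (sq_integrable τ t b)
  rw [integral_div, integral_sub hAB
      (sq_integrable τ a b), integral_add (sq_integrable τ t a) (sq_integrable τ t b),
    lemA τ t a ht ha, lemA τ t b ht hb, lemA τ a b ha hb]

lemma abs_min_sub_le {x y τ : ℝ} (hx : 0 ≤ x) (hy : 0 ≤ y) (hτ : 0 ≤ τ) :
    |min x τ - min y τ| ≤ τ := by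
  rw [abs_sub_le_iff]
  constructor
  · nlinarith [min_le_right x τ, le_min hy hτ]
  · nlinarith [min_le_right y τ, le_min hx hτ]


/-- kernel representation of the threshold-weighted CRPS with weight
`w = 1{0 ≤ s ≤ τ}` and chaining function `v(x) = min x τ`: for a probability
distribution `μ` on `[0,∞)` and `t ≥ 0`,
`∫_0^τ (1{s ≥ t} − F(s))² ds = E|min(X,τ) − min(t,τ)| − (1/2) E|min(X,τ) − min(X',τ)|`
with `X, X'` i.i.d. `~ μ`. -/
theorem twcrps_kernel_representation (μ : Measure ℝ) [IsProbabilityMeasure μ]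
    (hsupp : μ (Set.Iio 0) = 0) (τ : ℝ) (hτ : 0 < τ) (t : ℝ) (ht : 0 ≤ t) :
    (∫ s in Set.Ioc 0 τ, ((if s ≥ t then (1 : ℝ) else 0) - (μ (Set.Iic s)).toReal) ^ 2) =
      (∫ x, |min x τ - min t τ| ∂μ) -
        (1 / 2) * ∫ p, |min p.1 τ - min p.2 τ| ∂(μ.prod μ) := by
  have hprodae : ∀ᵐ p ∂(μ.prod μ), 0 ≤ p.1 ∧ 0 ≤ p.2 := by
    rw [ae_iff]
    refine measure_mono_null (fun p hp => ?_)
      (?_ : (μ.prod μ) ((Set.Iio 0 ×ˢ Set.univ) ∪ (Set.univ ×ˢ Set.Iio 0)) = 0)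
    · simp only [Set.mem_setOf_eq, not_and_or, not_le] at hp
      rcases hp with h | h
      · exact Or.inl ⟨h, Set.mem_univ _⟩
      · exact Or.inr ⟨Set.mem_univ _, h⟩
    · refine measure_union_null ?_ ?_ <;> rw [Measure.prod_prod] <;> simp [hsupp]
  have hInd : ∀ s : ℝ, (fun x => hh s x) = (Set.Iic s).indicator (1 : ℝ → ℝ) := by
    intro s; funext x; unfold hh; rw [Set.indicator_apply]
    by_cases h : x ≤ s <;> simp [Set.mem_Iic, h]
  have hx_int : ∀ s : ℝ, Integrable (fun x => hh s x) μ := by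
    intro s; rw [hInd s]
    exact (integrable_const (1:ℝ)).indicator measurableSet_Iic
  have hc : ∀ s : ℝ, ((if s ≥ t then (1:ℝ) else 0) - (μ (Set.Iic s)).toReal)
      = ∫ x, (hh s t - hh s x) ∂μ := by
    intro s
    rw [integral_sub (integrable_const _) (hx_int s), integral_const, probReal_univ,
      one_smul, hInd s, integral_indicator_one measurableSet_Iic]
    rfl
  have hsq : ∀ s : ℝ, (∫ x, (hh s t - hh s x) ∂μ) ^ 2 = ∫ p, gg t s p ∂(μ.prod μ) := by
    intro s
    rw [sq]
    exact (integral_prod_mul (fun x => hh s t - hh s x) (fun y => hh s t - hh s y)).symm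
  have hu1 : Integrable (fun p : ℝ × ℝ => |min t τ - min p.1 τ|) (μ.prod μ) := by
    refine Integrable.mono' (integrable_const τ)
      ((continuous_const.sub (continuous_fst.min continuous_const)).abs).aestronglyMeasurable ?_
    filter_upwards [hprodae] with p hp
    rw [Real.norm_eq_abs, abs_abs]
    exact abs_min_sub_le ht hp.1 hτ.le
  have hu2 : Integrable (fun p : ℝ × ℝ => |min t τ - min p.2 τ|) (μ.prod μ) := by
    refine Integrable.mono' (integrable_const τ)
      ((continuous_const.sub (continuous_snd.min continuous_const)).abs).aestronglyMeasurable ?_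
    filter_upwards [hprodae] with p hp
    rw [Real.norm_eq_abs, abs_abs]
    exact abs_min_sub_le ht hp.2 hτ.le
  have hw : Integrable (fun p : ℝ × ℝ => |min p.1 τ - min p.2 τ|) (μ.prod μ) := by
    refine Integrable.mono' (integrable_const τ)
      (((continuous_fst.min continuous_const).sub
        (continuous_snd.min continuous_const)).abs).aestronglyMeasurable ?_
    filter_upwards [hprodae] with p hp
    rw [Real.norm_eq_abs, abs_abs]
    exact abs_min_sub_le hp.1 hp.2 hτ.le
  have m1 : ∫ p, |min t τ - min p.1 τ| ∂(μ.prod μ) = ∫ x, |min t τ - min x τ| ∂μ := by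
    rw [show (fun p : ℝ × ℝ => |min t τ - min p.1 τ|)
        = fun p : ℝ × ℝ => (fun x => |min t τ - min x τ|) p.1 * (fun _ : ℝ => (1:ℝ)) p.2
        from funext fun p => by simp]
    rw [integral_prod_mul (fun x => |min t τ - min x τ|) (fun _ : ℝ => (1:ℝ)),
      integral_const, probReal_univ, one_smul, mul_one]
  have m2 : ∫ p, |min t τ - min p.2 τ| ∂(μ.prod μ) = ∫ x, |min t τ - min x τ| ∂μ := by
    rw [show (fun p : ℝ × ℝ => |min t τ - min p.2 τ|)
        = fun p : ℝ × ℝ => (fun _ : ℝ => (1:ℝ)) p.1 * (fun x => |min t τ - min x τ|) p.2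
        from funext fun p => by simp]
    rw [integral_prod_mul (fun _ : ℝ => (1:ℝ)) (fun x => |min t τ - min x τ|),
      integral_const, probReal_univ, one_smul, one_mul]
  calc
    (∫ s in Set.Ioc 0 τ, ((if s ≥ t then (1:ℝ) else 0) - (μ (Set.Iic s)).toReal) ^ 2)
        = ∫ s in Set.Ioc 0 τ, ∫ p, gg t s p ∂(μ.prod μ) := by
          simp_rw [hc, hsq]
    _ = ∫ p, (∫ s in Set.Ioc 0 τ, gg t s p) ∂(μ.prod μ) := by
          exact integral_integral_swap (f := gg t) (gg_int τ t μ)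
    _ = ∫ p, (|min t τ - min p.1 τ| + |min t τ - min p.2 τ| - |min p.1 τ - min p.2 τ|) / 2
          ∂(μ.prod μ) := by
          refine integral_congr_ae ?_
          filter_upwards [hprodae] with p hp
          have h := inner_eval τ t p.1 p.2 ht hp.1 hp.2
          simpa using h
    _ = ((∫ p, |min t τ - min p.1 τ| ∂(μ.prod μ)) + (∫ p, |min t τ - min p.2 τ| ∂(μ.prod μ))
          - (∫ p, |min p.1 τ - min p.2 τ| ∂(μ.prod μ))) / 2 := by
          have h12 : Integrable (fun p : ℝ × ℝ => |min t τ - min p.1 τ| + |min t τ - min p.2 τ|)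
              (μ.prod μ) := hu1.add hu2
          rw [integral_div, integral_sub h12 hw, integral_add hu1 hu2]
    _ = (∫ x, |min x τ - min t τ| ∂μ) -
          (1 / 2) * ∫ p, |min p.1 τ - min p.2 τ| ∂(μ.prod μ) := by
          rw [m1, m2]
          have hA : (∫ x, |min t τ - min x τ| ∂μ) = ∫ x, |min x τ - min t τ| ∂μ :=
            integral_congr_ae (Filter.Eventually.of_forall fun x => abs_sub_comm _ _)
          rw [hA]; ring
end
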